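/- Let k^{a₁…a_ℓ} be a Killing ℓ-tensor on ℝ^n. Then ∂^{(a₁}∂^{[c}k^{d]a₂…a_ℓ)} = 0; that is, the tensor field obtained from ∂^{a₁}∂^{c}k^{d a₂…a_ℓ} by antisymmetrizing over the indices c, d and then symmetrizing over the indices a₁,…,a_ℓ vanishes identically. -/

import Mathlib

noncomputable section

/-- Partial derivative `∂_a f` in the `a`-th coordinate direction on `ℝⁿ`. -/
def pd {n : ℕ} (a : Fin n) (f : (Fin n → ℝ) → ℝ) : (Fin n → ℝ) → ℝ :=
  fun x => fderiv ℝ f x (Pi.single a 1)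

/-- Raised partial derivative `∂^a f = g^{ab} ∂_b f`. -/
def pdUp {n : ℕ} (ginv : Matrix (Fin n) (Fin n) ℝ) (a : Fin n)
    (f : (Fin n → ℝ) → ℝ) : (Fin n → ℝ) → ℝ :=
  fun x => ∑ b, ginv a b * pd b f x

/-- Laplace operator `Δ f = g^{ab} ∂_a ∂_b f`. -/
def lap {n : ℕ} (ginv : Matrix (Fin n) (Fin n) ℝ) (f : (Fin n → ℝ) → ℝ) :
    (Fin n → ℝ) → ℝ :=
  fun x => ∑ a, ∑ b, ginv a b * pd a (pd b f) x

/-- Iterated partial derivative `∂_{i 0} ⋯ ∂_{i (m-1)} f` along a tuple of indices. -/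
def pdIter {n : ℕ} : (m : ℕ) → (Fin m → Fin n) → ((Fin n → ℝ) → ℝ) → ((Fin n → ℝ) → ℝ)
  | 0, _, f => f
  | m + 1, i, f => pd (i 0) (pdIter m (fun j => i j.succ) f)

/-- A (smooth, totally symmetric) Killing `ℓ`-tensor: `∂^{(a₀} k^{a₁…a_ℓ)} = 0`. -/
def IsKillingTensor {n : ℕ} (ginv : Matrix (Fin n) (Fin n) ℝ) (ℓ : ℕ)
    (k : (Fin ℓ → Fin n) → (Fin n → ℝ) → ℝ) : Prop :=
  (∀ i, ContDiff ℝ (⊤ : ℕ∞) (k i)) ∧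
  (∀ (σ : Equiv.Perm (Fin ℓ)) (i : Fin ℓ → Fin n), k (i ∘ σ) = k i) ∧
  (∀ (i : Fin (ℓ + 1) → Fin n) (x : Fin n → ℝ),
    ∑ σ : Equiv.Perm (Fin (ℓ + 1)),
      pdUp ginv (i (σ 0)) (k (fun j => i (σ j.succ))) x = 0)

end

section Aux

lemma s7aux1 : ((⊤:ℕ∞) : WithTop ℕ∞) + 1 ≤ ((⊤:ℕ∞) : WithTop ℕ∞) :=
  le_of_eq ENat.coe_top_add_one

lemma s7aux2 : (2 : WithTop ℕ∞) ≤ ((⊤:ℕ∞) : WithTop ℕ∞) :=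
  ENat.natCast_le_of_coe_top_le_withTop le_rfl 2

lemma s7aux3 : (1 : WithTop ℕ∞) ≤ ((⊤:ℕ∞) : WithTop ℕ∞) :=
  ENat.natCast_le_of_coe_top_le_withTop le_rfl 1

lemma pd_contDiff {n : ℕ} (a : Fin n) {f : (Fin n → ℝ) → ℝ}
    (hf : ContDiff ℝ (⊤ : ℕ∞) f) : ContDiff ℝ (⊤ : ℕ∞) (pd a f) := by
  unfold pd
  exact (hf.fderiv_right s7aux1).clm_apply contDiff_const

lemma pdUp_contDiff {n : ℕ} (ginv : Matrix (Fin n) (Fin n) ℝ) (a : Fin n)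
    {f : (Fin n → ℝ) → ℝ} (hf : ContDiff ℝ (⊤ : ℕ∞) f) :
    ContDiff ℝ (⊤ : ℕ∞) (pdUp ginv a f) := by
  unfold pdUp
  exact ContDiff.sum fun b _ => contDiff_const.mul (pd_contDiff b hf)

lemma pd_pd {n : ℕ} (a b : Fin n) (f : (Fin n → ℝ) → ℝ) (hf : ContDiff ℝ (⊤:ℕ∞) f)
    (x : Fin n → ℝ) :
    pd a (pd b f) x = fderiv ℝ (fderiv ℝ f) x (Pi.single a 1) (Pi.single b 1) := by
  unfold pd
  have hdf : DifferentiableAt ℝ (fderiv ℝ f) x :=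
    ((hf.fderiv_right s7aux1).differentiable (zero_lt_one.trans_le s7aux3).ne') x
  rw [fderiv_clm_apply hdf (differentiableAt_const _)]
  simp

lemma pd_comm {n : ℕ} (a b : Fin n) (f : (Fin n → ℝ) → ℝ) (hf : ContDiff ℝ (⊤:ℕ∞) f)
    (x : Fin n → ℝ) : pd a (pd b f) x = pd b (pd a f) x := by
  rw [pd_pd a b f hf, pd_pd b a f hf]
  exact (hf.contDiffAt.isSymmSndFDerivAt (by simpa [minSmoothness_of_isRCLikeNormedField] using s7aux2)) _ _

lemma pd_sum {n : ℕ} {ι : Type*} (a : Fin n) (s : Finset ι) (f : ι → (Fin n → ℝ) → ℝ)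
    (hf : ∀ i ∈ s, ContDiff ℝ (⊤:ℕ∞) (f i)) (x : Fin n → ℝ) :
    pd a (fun y => ∑ i ∈ s, f i y) x = ∑ i ∈ s, pd a (f i) x := by
  unfold pd
  rw [fderiv_fun_sum fun i hi => ((hf i hi).differentiable (zero_lt_one.trans_le s7aux3).ne') x]
  simp

lemma pd_const_mul {n : ℕ} (a : Fin n) (c : ℝ) {f : (Fin n → ℝ) → ℝ}
    (hf : ContDiff ℝ (⊤:ℕ∞) f) (x : Fin n → ℝ) :
    pd a (fun y => c * f y) x = c * pd a f x := by
  unfold pd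
  rw [fderiv_const_mul ((hf.differentiable (zero_lt_one.trans_le s7aux3).ne') x)]
  simp

lemma pdUp_sum {n : ℕ} {ι : Type*} (ginv : Matrix (Fin n) (Fin n) ℝ) (c : Fin n)
    (s : Finset ι) (f : ι → (Fin n → ℝ) → ℝ)
    (hf : ∀ i ∈ s, ContDiff ℝ (⊤:ℕ∞) (f i)) (x : Fin n → ℝ) :
    pdUp ginv c (fun y => ∑ i ∈ s, f i y) x = ∑ i ∈ s, pdUp ginv c (f i) x := by
  unfold pdUp
  rw [Finset.sum_comm]
  refine Finset.sum_congr rfl fun b _ => ?_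
  rw [pd_sum b s f hf x, Finset.mul_sum]

lemma pdUp_zero {n : ℕ} (ginv : Matrix (Fin n) (Fin n) ℝ) (c : Fin n) (x : Fin n → ℝ) :
    pdUp ginv c (fun _ => (0:ℝ)) x = 0 := by
  simp [pdUp, pd]

lemma pdUp_pdUp {n : ℕ} (ginv : Matrix (Fin n) (Fin n) ℝ) (a b : Fin n)
    {f : (Fin n → ℝ) → ℝ} (hf : ContDiff ℝ (⊤:ℕ∞) f) (x : Fin n → ℝ) :
    pdUp ginv a (pdUp ginv b f) x
      = ∑ p, ∑ q, ginv a p * (ginv b q * pd p (pd q f) x) := by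
  unfold pdUp
  refine Finset.sum_congr rfl fun p _ => ?_
  rw [pd_sum p Finset.univ _ (fun q _ => contDiff_const.mul (pd_contDiff q hf)) x,
    Finset.mul_sum]
  refine Finset.sum_congr rfl fun q _ => ?_
  rw [pd_const_mul p _ (pd_contDiff q hf) x]

lemma pdUp_comm {n : ℕ} (ginv : Matrix (Fin n) (Fin n) ℝ) (a b : Fin n)
    {f : (Fin n → ℝ) → ℝ} (hf : ContDiff ℝ (⊤:ℕ∞) f) (x : Fin n → ℝ) :
    pdUp ginv a (pdUp ginv b f) x = pdUp ginv b (pdUp ginv a f) x := by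
  rw [pdUp_pdUp ginv a b hf x, pdUp_pdUp ginv b a hf x, Finset.sum_comm]
  refine Finset.sum_congr rfl fun q _ => Finset.sum_congr rfl fun p _ => ?_
  rw [pd_comm p q f hf x]
  ring

/-- The reindexing bijection on `Fin ℓ × Perm (Fin ℓ)`. -/
def s7equiv (ℓ : ℕ) : (Fin (ℓ+1) × Equiv.Perm (Fin (ℓ+1))) ≃ (Fin (ℓ+1) × Equiv.Perm (Fin (ℓ+1))) where
  toFun p := (p.2⁻¹ p.1, p.2 * Equiv.swap 0 (p.2⁻¹ p.1))
  invFun p := (p.2 0, p.2 * Equiv.swap 0 p.1)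
  left_inv p := by
    obtain ⟨q, σ⟩ := p
    simp [mul_assoc, Equiv.swap_mul_self, Equiv.Perm.mul_apply]
  right_inv p := by
    obtain ⟨j, ρ⟩ := p
    simp [mul_assoc, Equiv.swap_mul_self, Equiv.Perm.mul_apply]

end Aux

set_option maxHeartbeats 2000000 in
/-- for a Killing `ℓ`-tensor `k` (valence `ℓ = m + 1 ≥ 1`) on `ℝⁿ`,
`∂^{(a₁} ∂^{[c} k^{d] a₂ … a_ℓ)} = 0`: antisymmetrizing `∂^{a₁} ∂^{c} k^{d a₂ … a_ℓ}`
over `c, d` and symmetrizing over `a₁, …, a_ℓ` gives zero. -/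
theorem stmt7 {n m : ℕ} (hn : 0 < n)
    (g ginv : Matrix (Fin n) (Fin n) ℝ) (hgsym : g.IsSymm) (hginv : g * ginv = 1)
    (k : (Fin (m + 1) → Fin n) → (Fin n → ℝ) → ℝ)
    (hk : IsKillingTensor ginv (m + 1) k) :
    ∀ (c d : Fin n) (a : Fin (m + 1) → Fin n) (x : Fin n → ℝ),
      (∑ σ : Equiv.Perm (Fin (m + 1)),
        pdUp ginv (a (σ 0))
          (pdUp ginv c (k (Fin.cons d (fun j => a (σ j.succ))))) x) -
      (∑ σ : Equiv.Perm (Fin (m + 1)),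
        pdUp ginv (a (σ 0))
          (pdUp ginv d (k (Fin.cons c (fun j => a (σ j.succ))))) x) = 0 := by
  obtain ⟨hks, hsym, hkill⟩ := hk
  intro c d a x
  -- the function appearing in the Killing equation is identically zero
  have hzero : ∀ (i : Fin (m+2) → Fin n),
      (fun y => ∑ σ : Equiv.Perm (Fin (m+2)),
        pdUp ginv (i (σ 0)) (k (fun j => i (σ j.succ))) y) = fun _ => (0:ℝ) :=
    fun i => funext fun y => hkill i y
  -- derivative of the Killing equation
  have DK : ∀ (e : Fin n) (i : Fin (m+2) → Fin n),
      ∑ τ : Equiv.Perm (Fin (m+2)),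
        pdUp ginv e (pdUp ginv (i (τ 0)) (k (fun j => i (τ j.succ)))) x = 0 := by
    intro e i
    rw [← pdUp_sum ginv e Finset.univ
        (fun τ : Equiv.Perm (Fin (m+2)) => pdUp ginv (i (τ 0)) (k (fun j => i (τ j.succ))))
        (fun τ _ => pdUp_contDiff ginv _ (hks _)) x, hzero i, pdUp_zero]
  -- decompose the sum over `Perm (Fin (m+2))`
  have split : ∀ (e : Fin n) (i : Fin (m+2) → Fin n),
      ∑ τ : Equiv.Perm (Fin (m+2)),
        pdUp ginv e (pdUp ginv (i (τ 0)) (k (fun j => i (τ j.succ)))) x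
      = ∑ p : Fin (m+2), ∑ σ : Equiv.Perm (Fin (m+1)),
          pdUp ginv e (pdUp ginv (i p)
            (k (fun j => i (Equiv.swap 0 p ((σ j).succ))))) x := by
    intro e i
    rw [← Equiv.sum_comp Equiv.Perm.decomposeFin.symm
      (fun τ : Equiv.Perm (Fin (m+2)) =>
        pdUp ginv e (pdUp ginv (i (τ 0)) (k (fun j => i (τ j.succ)))) x),
      Fintype.sum_prod_type]
    refine Finset.sum_congr rfl fun p _ => Finset.sum_congr rfl fun σ _ => ?_
    rw [Equiv.Perm.decomposeFin_symm_apply_zero]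
    have harg : (fun j : Fin (m+1) => i (Equiv.Perm.decomposeFin.symm (p, σ) j.succ))
        = fun j => i (Equiv.swap 0 p ((σ j).succ)) :=
      funext fun j => by rw [Equiv.Perm.decomposeFin_symm_apply_succ]
    rw [harg]
  -- the key identity
  have key : ∀ c' d' : Fin n,
      (∑ σ : Equiv.Perm (Fin (m+1)),
        pdUp ginv c' (pdUp ginv d' (k (fun j => a (σ j)))) x)
      + (m+1) • (∑ σ : Equiv.Perm (Fin (m+1)),
          pdUp ginv (a (σ 0)) (pdUp ginv c' (k (Fin.cons d' (fun j => a (σ j.succ))))) x)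
      = 0 := by
    intro c' d'
    have h0 := DK c' (Fin.cons d' a)
    rw [split c' (Fin.cons d' a), Fin.sum_univ_succ] at h0
    -- identify the `p = 0` part
    have e0 : (∑ σ : Equiv.Perm (Fin (m+1)),
        pdUp ginv c' (pdUp ginv ((Fin.cons d' a : Fin (m+2) → Fin n) 0)
          (k (fun j => (Fin.cons d' a : Fin (m+2) → Fin n) (Equiv.swap 0 0 ((σ j).succ))))) x)
        = ∑ σ : Equiv.Perm (Fin (m+1)),
            pdUp ginv c' (pdUp ginv d' (k (fun j => a (σ j)))) x := by
      refine Finset.sum_congr rfl fun σ _ => ?_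
      simp [Equiv.swap_self]
    -- identify the `p = q.succ` part

    have es : ∀ (q : Fin (m+1)) (σ : Equiv.Perm (Fin (m+1))),
        pdUp ginv c' (pdUp ginv ((Fin.cons d' a : Fin (m+2) → Fin n) q.succ)
          (k (fun j => (Fin.cons d' a : Fin (m+2) → Fin n) (Equiv.swap 0 q.succ ((σ j).succ))))) x
        = pdUp ginv (a ((σ * Equiv.swap 0 (σ⁻¹ q)) 0))
            (pdUp ginv c'
              (k (Fin.cons d' (fun j => a ((σ * Equiv.swap 0 (σ⁻¹ q)) j.succ))))) x := by
      intro q σ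
      have hσ'0 : (σ * Equiv.swap 0 (σ⁻¹ q)) 0 = q := by
        simp [Equiv.Perm.mul_apply]
      have harg : ((fun j : Fin (m+1) => (Fin.cons d' a : Fin (m+2) → Fin n) (Equiv.swap 0 q.succ ((σ j).succ)))
          ∘ (Equiv.swap 0 (σ⁻¹ q)))
          = Fin.cons d' (fun j => a ((σ * Equiv.swap 0 (σ⁻¹ q)) j.succ)) := by
        funext j
        induction j using Fin.cases with
        | zero =>
          simp [Function.comp, Equiv.Perm.inv_def]
        | succ j₀ =>
          have hne : (σ * Equiv.swap 0 (σ⁻¹ q)) j₀.succ ≠ q := by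
            intro h
            exact Fin.succ_ne_zero j₀
              ((σ * Equiv.swap 0 (σ⁻¹ q)).injective (h.trans hσ'0.symm))
          simp only [Function.comp_apply, Fin.cons_succ]
          have h1 : σ (Equiv.swap 0 (σ⁻¹ q) j₀.succ) = (σ * Equiv.swap 0 (σ⁻¹ q)) j₀.succ := rfl
          rw [h1, Equiv.swap_apply_of_ne_of_ne (Fin.succ_ne_zero _)
            (fun hc => hne (Fin.succ_injective _ hc)), Fin.cons_succ]
      rw [Fin.cons_succ, ← hsym (Equiv.swap 0 (σ⁻¹ q))
        (fun j => (Fin.cons d' a : Fin (m+2) → Fin n) (Equiv.swap 0 q.succ ((σ j).succ))), harg,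
        show a q = a ((σ * Equiv.swap 0 (σ⁻¹ q)) 0) from (congrArg a hσ'0).symm]
      exact pdUp_comm ginv c' (a ((σ * Equiv.swap 0 (σ⁻¹ q)) 0)) (hks _) x
    have hsum2 : (∑ q : Fin (m+1), ∑ σ : Equiv.Perm (Fin (m+1)),
        pdUp ginv c' (pdUp ginv ((Fin.cons d' a : Fin (m+2) → Fin n) q.succ)
          (k (fun j => (Fin.cons d' a : Fin (m+2) → Fin n) (Equiv.swap 0 q.succ ((σ j).succ))))) x)
        = (m+1) • ∑ ρ : Equiv.Perm (Fin (m+1)),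
            pdUp ginv (a (ρ 0)) (pdUp ginv c' (k (Fin.cons d' (fun j => a (ρ j.succ))))) x := by
      calc (∑ q : Fin (m+1), ∑ σ : Equiv.Perm (Fin (m+1)),
            pdUp ginv c' (pdUp ginv ((Fin.cons d' a : Fin (m+2) → Fin n) q.succ)
              (k (fun j => (Fin.cons d' a : Fin (m+2) → Fin n) (Equiv.swap 0 q.succ ((σ j).succ))))) x)
          = ∑ q : Fin (m+1), ∑ σ : Equiv.Perm (Fin (m+1)),
              pdUp ginv (a ((σ * Equiv.swap 0 (σ⁻¹ q)) 0))
                (pdUp ginv c'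
                  (k (Fin.cons d' (fun j => a ((σ * Equiv.swap 0 (σ⁻¹ q)) j.succ))))) x :=
            Finset.sum_congr rfl fun q _ => Finset.sum_congr rfl fun σ _ => es q σ
        _ = ∑ p : Fin (m+1) × Equiv.Perm (Fin (m+1)),
              pdUp ginv (a ((p.2 * Equiv.swap 0 (p.2⁻¹ p.1)) 0))
                (pdUp ginv c'
                  (k (Fin.cons d' (fun j => a ((p.2 * Equiv.swap 0 (p.2⁻¹ p.1)) j.succ))))) x :=
            by rw [Fintype.sum_prod_type]
        _ = ∑ p : Fin (m+1) × Equiv.Perm (Fin (m+1)),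
              pdUp ginv (a (p.2 0))
                (pdUp ginv c' (k (Fin.cons d' (fun j => a (p.2 j.succ))))) x :=
            Fintype.sum_equiv (s7equiv m)
              (fun p => pdUp ginv (a ((p.2 * Equiv.swap 0 (p.2⁻¹ p.1)) 0))
                (pdUp ginv c'
                  (k (Fin.cons d' (fun j => a ((p.2 * Equiv.swap 0 (p.2⁻¹ p.1)) j.succ))))) x)
              (fun p => pdUp ginv (a (p.2 0))
                (pdUp ginv c' (k (Fin.cons d' (fun j => a (p.2 j.succ))))) x)
              (fun p => rfl)
        _ = ∑ _q : Fin (m+1), ∑ ρ : Equiv.Perm (Fin (m+1)),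
              pdUp ginv (a (ρ 0))
                (pdUp ginv c' (k (Fin.cons d' (fun j => a (ρ j.succ))))) x :=
            by rw [Fintype.sum_prod_type]
        _ = (m+1) • ∑ ρ : Equiv.Perm (Fin (m+1)),
              pdUp ginv (a (ρ 0))
                (pdUp ginv c' (k (Fin.cons d' (fun j => a (ρ j.succ))))) x := by
            rw [Finset.sum_const, Finset.card_univ, Fintype.card_fin]
    rw [e0, hsum2] at h0
    exact h0
  -- endgame
  have hT : (∑ σ : Equiv.Perm (Fin (m+1)),
        pdUp ginv c (pdUp ginv d (k (fun j => a (σ j)))) x)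
      = ∑ σ : Equiv.Perm (Fin (m+1)),
        pdUp ginv d (pdUp ginv c (k (fun j => a (σ j)))) x :=
    Finset.sum_congr rfl fun σ _ => pdUp_comm ginv c d (hks _) x
  have k1 := key c d
  have k2 := key d c
  rw [hT] at k1
  simp only [nsmul_eq_mul] at k1 k2
  have hm : ((m:ℝ)+1) ≠ 0 := by positivity
  have hS : (∑ σ : Equiv.Perm (Fin (m + 1)),
        pdUp ginv (a (σ 0))
          (pdUp ginv c (k (Fin.cons d (fun j => a (σ j.succ))))) x)
      = ∑ σ : Equiv.Perm (Fin (m + 1)),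
        pdUp ginv (a (σ 0))
          (pdUp ginv d (k (Fin.cons c (fun j => a (σ j.succ))))) x := by
    apply mul_left_cancel₀ hm
    push_cast at k1 k2
    linarith
  rw [hS, sub_self]
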